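/- For every n ≥ 1 one has z_n ∈ U_{q_n}, i.e., z_n has a unique q_n-expansion. Moreover, the sequence (z_n)_{n≥1} is strictly decreasing and converges to 1 as n → ∞. -/

import Mathlib

open Filter Topology

noncomputable section

/-- The value `Σ_{i≥0} d i / q^(i+1)` of a (0-indexed) digit sequence `d` in base `q`;
this corresponds to `((d_i)_{i≥1})_q` with `d_i = d (i-1)`. -/
def seqVal (q : ℝ) (d : ℕ → ℕ) : ℝ := ∑' i : ℕ, (d i : ℝ) / q ^ (i + 1)

/-- `d` is a `q`-expansion of `x` with digits in `{0,1}`. -/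
def IsExpansion (q x : ℝ) (d : ℕ → ℕ) : Prop :=
  (∀ i, d i ≤ 1) ∧ x = seqVal q d

/-- `x` has a unique `q`-expansion. -/
def HasUniqueExpansion (q x : ℝ) : Prop := ∃! d : ℕ → ℕ, IsExpansion q x d

/-- The set `U(x)` of univoque bases of `x`. -/
def UBases (x : ℝ) : Set ℝ := {q | 1 < q ∧ q < 2 ∧ HasUniqueExpansion q x}

/-- `q_s(x) = inf U(x)`. -/
def qs (x : ℝ) : ℝ := sInf (UBases x)

/-- The univoque set `U_q` of `x ∈ [0, 1/(q-1)]` with a unique `q`-expansion. -/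
def Uset (q : ℝ) : Set ℝ :=
  {x | x ∈ Set.Icc 0 (1 / (q - 1)) ∧ HasUniqueExpansion q x}

/-- The set `U_q'` of digit sequences which are the unique `q`-expansion of their value. -/
def USeq (q : ℝ) : Set (ℕ → ℕ) :=
  {d | (∀ i, d i ≤ 1) ∧ ∀ e : ℕ → ℕ, IsExpansion q (seqVal q d) e → e = d}

/-- The Thue–Morse sequence: `τ 0 = 0`, `τ (2n) = τ n`, `τ (2n+1) = 1 - τ n`. -/
def IsThueMorse (τ : ℕ → ℕ) : Prop :=
  τ 0 = 0 ∧ (∀ n, τ (2 * n) = τ n) ∧ ∀ n, τ (2 * n + 1) = 1 - τ n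

/-- `q` is the Komornik–Loreti constant: the base in `(1,2)` with `1 = Σ_{i≥1} τ_i q^{-i}`. -/
def IsKL (τ : ℕ → ℕ) (q : ℝ) : Prop :=
  1 < q ∧ q < 2 ∧ (1 : ℝ) = ∑' i : ℕ, (τ (i + 1) : ℝ) / q ^ (i + 1)

/-- `Q` is the sequence of bases `q_n`: `Q 0 = 1` and for `n ≥ 1`, `Q n` is the root in
`(1,2)` of `1 = Σ_{i=1}^{2^n} τ_i q^{-i}`. -/
def IsBaseSeq (τ : ℕ → ℕ) (Q : ℕ → ℝ) : Prop :=
  Q 0 = 1 ∧ ∀ n, 1 ≤ n → 1 < Q n ∧ Q n < 2 ∧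
    (1 : ℝ) = ∑ i ∈ Finset.range (2 ^ n), (τ (i + 1) : ℝ) / (Q n) ^ (i + 1)

/-- `D_n = ⋃_{q ∈ (q_{n-1}, q_n]} U_q`. -/
def D (Q : ℕ → ℝ) (n : ℕ) : Set ℝ := ⋃ q ∈ Set.Ioc (Q (n - 1)) (Q n), Uset q

/-- The golden ratio. -/
def qG : ℝ := (1 + Real.sqrt 5) / 2

/-- Strict lexicographical order on digit sequences. -/
def seqLt (c d : ℕ → ℕ) : Prop := ∃ n, (∀ i, i < n → c i = d i) ∧ c n < d n

/-- The word `τ_1 ⋯ τ_m`. -/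
def tmPrefix (τ : ℕ → ℕ) (m : ℕ) : List ℕ := (List.range m).map fun i => τ (i + 1)

/-- `w⁻`: decrease the last digit of a word by 1. -/
def lastDec (w : List ℕ) : List ℕ := w.dropLast ++ [w.getLastD 0 - 1]

/-- `w⁺`: increase the last digit of a word by 1. -/
def lastInc (w : List ℕ) : List ℕ := w.dropLast ++ [w.getLastD 0 + 1]

/-- The reflection of a word. -/
def reflect (w : List ℕ) : List ℕ := w.map fun d => 1 - d

/-- The infinite sequence given by the prefix `p` followed by periodic repetition of `w`. -/
def prefPeriodic (p w : List ℕ) : ℕ → ℕ := fun j =>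
  if j < p.length then p.getD j 0 else w.getD ((j - p.length) % w.length) 0

/-- `z_n = ((τ_1⋯τ_{2^{n-1}})(τ_{2^{n-1}+1}⋯τ_{2^n})^∞)_{q_n}`. -/
def zVal (τ : ℕ → ℕ) (Q : ℕ → ℝ) (n : ℕ) : ℝ :=
  seqVal (Q n) (prefPeriodic (tmPrefix τ (2 ^ (n - 1)))
    ((List.range (2 ^ (n - 1))).map fun i => τ (2 ^ (n - 1) + (i + 1))))

/-- `z_{1,k} = Σ_{i=1}^k q_G^{-i} + 1/(q_G^k (q_G^2 - 1))`. -/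
def z1 (k : ℕ) : ℝ :=
  (∑ i ∈ Finset.range k, 1 / qG ^ (i + 1)) + 1 / (qG ^ k * (qG ^ 2 - 1))

/-! ### Auxiliary development -/

section TMfacts
variable {τ : ℕ → ℕ}

lemma tau_le_one (hτ : IsThueMorse τ) : ∀ j, τ j ≤ 1 := by
  intro j
  induction j using Nat.strong_induction_on with
  | _ j ih =>
    rcases Nat.even_or_odd j with ⟨k, hk⟩ | ⟨k, hk⟩
    · rcases Nat.eq_zero_or_pos k with rfl | hkpos
      · simp [hk, hτ.1]
      · have : j = 2 * k := by omega
        rw [this, hτ.2.1]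
        exact ih k (by omega)
    · have : j = 2 * k + 1 := by omega
      rw [this, hτ.2.2]; omega

lemma tau_odd (hτ : IsThueMorse τ) (n : ℕ) : τ (2 * n + 1) + τ n = 1 := by
  have h := hτ.2.2 n
  have := tau_le_one hτ n
  omega

lemma tau_one (hτ : IsThueMorse τ) : τ 1 = 1 := by
  have := tau_odd hτ 0
  simp [hτ.1] at this; omega

lemma tau_two (hτ : IsThueMorse τ) : τ 2 = 1 := by
  have := hτ.2.1 1; rw [this, tau_one hτ]

lemma tau_pow2 (hτ : IsThueMorse τ) (k : ℕ) : τ (2 ^ k) = 1 := by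
  induction k with
  | zero => simpa using tau_one hτ
  | succ k ih =>
    have : (2:ℕ) ^ (k+1) = 2 * 2 ^ k := by ring
    rw [this, hτ.2.1]; exact ih

/-- complement structure: `τ (2^k + i) + τ i = 1` for `i < 2^k`. -/
lemma tau_compl (hτ : IsThueMorse τ) : ∀ k, ∀ i < 2 ^ k, τ (2 ^ k + i) + τ i = 1 := by
  intro k
  induction k with
  | zero =>
    intro i hi
    interval_cases i
    simp [tau_one hτ, hτ.1]
  | succ k ih =>
    intro i hi
    rcases Nat.even_or_odd i with ⟨j, hj⟩ | ⟨j, hj⟩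
    · have h1 : 2 ^ (k+1) + i = 2 * (2 ^ k + j) := by rw [hj]; ring
      have h2 : i = 2 * j := by omega
      rw [h1, hτ.2.1, h2, hτ.2.1]
      exact ih j (by omega)
    · have h1 : 2 ^ (k+1) + i = 2 * (2 ^ k + j) + 1 := by omega
      have h2 : i = 2 * j + 1 := by omega
      have e1 := tau_odd hτ (2 ^ k + j)
      have e2 := tau_odd hτ j
      have e3 := ih j (by omega)
      rw [h1, h2]
      omega

/-- Weak lexicographic maximality of shifts of the Thue–Morse sequence (upper bound). -/
lemma lexD (hτ : IsThueMorse τ) : ∀ i, 1 ≤ i → ∀ k, 1 ≤ k →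
    (∀ s, 1 ≤ s → s < k → τ (i + s) = τ s) → τ (i + k) ≤ τ k := by
  intro i
  induction i using Nat.strong_induction_on with
  | _ i ih =>
  intro hi k hk H
  have t1 := tau_one hτ
  have t2 := tau_two hτ
  rcases Nat.even_or_odd i with ⟨i', hi'⟩ | ⟨i', hi'⟩
  · have hi'1 : 1 ≤ i' := by omega
    have hti' := tau_le_one hτ i'
    rcases Nat.lt_or_ge 1 k with hk2 | hk1
    · rcases Nat.eq_zero_or_pos (τ i') with h0 | h1
      · have trans : ∀ r, 1 ≤ r → 2 * r < k → τ (i' + r) = τ r := by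
          intro r hr h2r
          have := H (2 * r) (by omega) h2r
          have e1 : i + 2 * r = 2 * (i' + r) := by omega
          rw [e1, hτ.2.1, hτ.2.1] at this
          exact this
        rcases Nat.even_or_odd k with ⟨r, hkr⟩ | ⟨r, hkr⟩
        · have hr1 : 1 ≤ r := by omega
          have e1 : i + k = 2 * (i' + r) := by omega
          have e2 : k = 2 * r := by omega
          rw [e1, hτ.2.1, e2, hτ.2.1]
          exact ih i' (by omega) hi'1 r hr1 (fun s hs hsr => trans s hs (by omega))
        · have hr1 : 1 ≤ r := by omega
          have e1 : i + k = 2 * (i' + r) + 1 := by omega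
          have e2 : k = 2 * r + 1 := by omega
          have o1 := tau_odd hτ (i' + r)
          have o2 := tau_odd hτ r
          have := trans r hr1 (by omega)
          rw [e1, e2]; omega
      · have h := H 1 le_rfl hk2
        have e1 : i + 1 = 2 * i' + 1 := by omega
        rw [e1] at h
        have := tau_odd hτ i'
        omega
    · have hk1' : k = 1 := by omega
      subst hk1'
      rw [t1]; exact tau_le_one hτ _
  · have e1 : i + 1 = 2 * (i' + 1) := by omega
    have e2 : i + 2 = 2 * (i' + 1) + 1 := by omega
    rcases Nat.lt_or_ge 2 k with hk3 | hk2
    · exfalso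
      have h1 := H 1 le_rfl (by omega)
      have h2 := H 2 (by omega) (by omega)
      rw [e1, hτ.2.1] at h1
      rw [e2] at h2
      have := tau_odd hτ (i' + 1)
      omega
    · rcases Nat.lt_or_ge 1 k with hk2' | hk1
      · have hk2'' : k = 2 := by omega
        subst hk2''
        have h1 := H 1 le_rfl (by omega)
        rw [e1, hτ.2.1] at h1
        rw [e2]
        have := tau_odd hτ (i' + 1)
        omega
      · have hk1' : k = 1 := by omega
        subst hk1'
        rw [t1]; exact tau_le_one hτ _

/-- Weak lexicographic minimality of shifts of the Thue–Morse sequence (reflected). -/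
lemma lexE (hτ : IsThueMorse τ) : ∀ i, 1 ≤ i → ∀ k, 1 ≤ k →
    (∀ s, 1 ≤ s → s < k → τ (i + s) + τ s = 1) → 1 ≤ τ (i + k) + τ k := by
  intro i
  induction i using Nat.strong_induction_on with
  | _ i ih =>
  intro hi k hk H
  have t1 := tau_one hτ
  have t2 := tau_two hτ
  rcases Nat.even_or_odd i with ⟨i', hi'⟩ | ⟨i', hi'⟩
  · have hi'1 : 1 ≤ i' := by omega
    rcases Nat.lt_or_ge 1 k with hk2 | hk1
    · have h1 := H 1 le_rfl hk2
      have e1 : i + 1 = 2 * i' + 1 := by omega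
      rw [e1] at h1
      have o0 := tau_odd hτ i'
      have trans : ∀ r, 1 ≤ r → 2 * r < k → τ (i' + r) + τ r = 1 := by
        intro r hr h2r
        have := H (2 * r) (by omega) h2r
        have e : i + 2 * r = 2 * (i' + r) := by omega
        rw [e, hτ.2.1, hτ.2.1] at this
        exact this
      rcases Nat.even_or_odd k with ⟨r, hkr⟩ | ⟨r, hkr⟩
      · have hr1 : 1 ≤ r := by omega
        have e1' : i + k = 2 * (i' + r) := by omega
        have e2' : k = 2 * r := by omega
        rw [e1', hτ.2.1, e2', hτ.2.1]
        exact ih i' (by omega) hi'1 r hr1 (fun s hs hsr => trans s hs (by omega))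
      · have hr1 : 1 ≤ r := by omega
        have e1' : i + k = 2 * (i' + r) + 1 := by omega
        have e2' : k = 2 * r + 1 := by omega
        have o1 := tau_odd hτ (i' + r)
        have o2 := tau_odd hτ r
        have := trans r hr1 (by omega)
        rw [e1', e2']; omega
    · have hk1' : k = 1 := by omega
      subst hk1'
      have e1 : i + 1 = 2 * i' + 1 := by omega
      rw [e1, t1]
      have := tau_odd hτ i'
      omega
  · have e1 : i + 1 = 2 * (i' + 1) := by omega
    have e2 : i + 2 = 2 * (i' + 1) + 1 := by omega
    rcases Nat.lt_or_ge 2 k with hk3 | hk2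
    · exfalso
      have h1 := H 1 le_rfl (by omega)
      have h2 := H 2 (by omega) (by omega)
      rw [e1, hτ.2.1] at h1
      rw [e2] at h2
      have := tau_odd hτ (i' + 1)
      omega
    · rcases Nat.lt_or_ge 1 k with hk2' | hk1
      · have hk2'' : k = 2 := by omega
        subst hk2''
        rw [e2]
        have h3 := tau_odd hτ (i' + 1)
        have h4 := tau_le_one hτ (i' + 1)
        omega
      · have hk1' : k = 1 := by omega
        subst hk1'
        rw [e1, hτ.2.1, t1]
        omega

end TMfacts

section SV
variable {q : ℝ} {d : ℕ → ℕ}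

lemma sv_summable (hq : 1 < q) (hd : ∀ i, d i ≤ 1) :
    Summable (fun i : ℕ => (d i : ℝ) / q ^ (i + 1)) := by
  have hq0 : 0 < q := by linarith
  have hgeom : Summable (fun i : ℕ => (1/q) ^ (i+1)) := by
    have : Summable (fun i : ℕ => (1/q) ^ i) :=
      summable_geometric_of_lt_one (by positivity) (by rw [div_lt_one hq0]; linarith)
    simpa [pow_succ, mul_comm] using this.mul_right (1/q)
  refine Summable.of_nonneg_of_le (fun i => by positivity) (fun i => ?_) hgeom
  have h1 : (d i : ℝ) ≤ 1 := by exact_mod_cast hd i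
  rw [div_pow, one_pow, div_le_div_iff₀ (by positivity) (by positivity)]
  nlinarith [pow_pos hq0 (i+1)]

lemma sv_nonneg (hq : 1 < q) : 0 ≤ seqVal q d := by
  apply tsum_nonneg
  intro i
  have : (0:ℝ) < q := by linarith
  positivity

lemma sv_geom_val (hq : 1 < q) : ∑' i : ℕ, (1/q) ^ (i + 1) = 1 / (q - 1) := by
  have hq0 : 0 < q := by linarith
  have h1 : (1/q) < 1 := by rw [div_lt_one hq0]; linarith
  have h0 : (0:ℝ) ≤ 1/q := by positivity
  have : ∑' i : ℕ, (1/q) ^ (i+1) = (∑' i : ℕ, (1/q) ^ i) * (1/q) := by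
    rw [← tsum_mul_right]
    exact tsum_congr fun i => by rw [pow_succ]
  have h1 : q - 1 ≠ 0 := by linarith
  have h2 : q ≠ 0 := by linarith
  rw [this, tsum_geometric_of_lt_one (by positivity) (by rw [div_lt_one hq0]; linarith)]
  field_simp

lemma sv_le (hq : 1 < q) (hd : ∀ i, d i ≤ 1) : seqVal q d ≤ 1 / (q - 1) := by
  have hq0 : 0 < q := by linarith
  have hgeom : Summable (fun i : ℕ => (1/q) ^ (i+1)) := by
    have : Summable (fun i : ℕ => (1/q) ^ i) :=
      summable_geometric_of_lt_one (by positivity) (by rw [div_lt_one hq0]; linarith)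
    simpa [pow_succ, mul_comm] using this.mul_right (1/q)
  have h := Summable.tsum_le_tsum (f := fun i : ℕ => (d i : ℝ) / q ^ (i+1))
      (g := fun i : ℕ => (1/q) ^ (i+1)) ?_ (sv_summable hq hd) hgeom
  · calc seqVal q d ≤ ∑' i : ℕ, (1/q) ^ (i+1) := h
      _ = 1 / (q-1) := sv_geom_val hq
  · intro i
    have h1 : (d i : ℝ) ≤ 1 := by exact_mod_cast hd i
    rw [div_pow, one_pow, div_le_div_iff₀ (by positivity) (by positivity)]
    nlinarith [pow_pos hq0 (i+1)]

lemma sv_split (hq : 1 < q) (hd : ∀ i, d i ≤ 1) (k : ℕ) :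
    seqVal q d = (∑ j ∈ Finset.range k, (d j : ℝ) / q ^ (j + 1))
      + (1/q) ^ k * seqVal q (fun x => d (k + x)) := by
  have hs := sv_summable hq hd
  have hq0 : 0 < q := by linarith
  have hs' : Summable (fun n => (d (n + k) : ℝ) / q ^ (n + k + 1)) :=
    (summable_nat_add_iff (f := fun i : ℕ => (d i : ℝ) / q ^ (i + 1)) k).2 hs
  have key := Summable.sum_add_tsum_nat_add' (f := fun i : ℕ => (d i : ℝ) / q ^ (i + 1)) (k := k) hs'
  have e2 : ∑' (i : ℕ), (d (i + k) : ℝ) / q ^ (i + k + 1)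
      = (1/q) ^ k * seqVal q (fun x => d (k + x)) := by
    rw [seqVal, ← tsum_mul_left]
    refine tsum_congr fun i => ?_
    have hqk : q ^ k ≠ 0 := by positivity
    have hq1 : q ^ (i+1) ≠ 0 := by positivity
    rw [add_comm i k, div_pow, one_pow]
    rw [div_mul_div_comm, one_mul, ← pow_add]
    congr 2
  calc seqVal q d = ∑' (i : ℕ), (d i : ℝ) / q ^ (i + 1) := rfl
    _ = (∑ j ∈ Finset.range k, (d j : ℝ) / q ^ (j + 1))
        + ∑' (i : ℕ), (d (i + k) : ℝ) / q ^ (i + k + 1) := key.symm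
    _ = _ := by rw [e2]

lemma sv_periodic (hq : 1 < q) (hd : ∀ i, d i ≤ 1) {p : ℕ} (hp : 1 ≤ p)
    (hper : ∀ i, d (i + p) = d i) :
    seqVal q d = (∑ j ∈ Finset.range p, (d j : ℝ) / q ^ (j + 1)) / (1 - (1/q) ^ p) := by
  have hq0 : 0 < q := by linarith
  have hlt : (1/q) ^ p < 1 := by
    apply pow_lt_one₀ (by positivity) (by rw [div_lt_one hq0]; linarith) (by omega)
  have hne : 1 - (1/q) ^ p ≠ 0 := by linarith
  have hsplit := sv_split hq hd p
  have hfix : (fun x => d (p + x)) = d := by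
    funext x; rw [add_comm]; exact hper x
  rw [hfix] at hsplit
  rw [eq_div_iff hne]
  linear_combination hsplit

lemma sv_reflect (hq : 1 < q) (hd : ∀ i, d i ≤ 1) :
    seqVal q (fun i => 1 - d i) = 1 / (q - 1) - seqVal q d := by
  have hq0 : 0 < q := by linarith
  have hgeom : Summable (fun i : ℕ => (1/q) ^ (i+1)) := by
    have : Summable (fun i : ℕ => (1/q) ^ i) :=
      summable_geometric_of_lt_one (by positivity) (by rw [div_lt_one hq0]; linarith)
    simpa [pow_succ, mul_comm] using this.mul_right (1/q)
  have hs := sv_summable hq hd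
  have key : (fun i : ℕ => ((1 - d i : ℕ) : ℝ) / q ^ (i+1))
      = fun i : ℕ => (1/q) ^ (i+1) - (d i : ℝ) / q ^ (i+1) := by
    funext i
    have : ((1 - d i : ℕ) : ℝ) = 1 - (d i : ℝ) := by
      have := hd i
      push_cast [Nat.cast_sub this]
      ring
    rw [this, div_pow, one_pow]
    ring
  rw [seqVal, key, Summable.tsum_sub hgeom hs, sv_geom_val hq]
  rfl

lemma sv_term_le (hq : 1 < q) (hd : ∀ i, d i ≤ 1) {j : ℕ} (h : d j = 1) :
    (1/q) ^ (j + 1) ≤ seqVal q d := by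
  have hq0 : 0 < q := by linarith
  have := Summable.le_tsum (sv_summable hq hd) j (fun i _ => by positivity)
  calc (1/q) ^ (j+1) = (d j : ℝ) / q ^ (j+1) := by
        rw [h, div_pow, one_pow]; norm_num
    _ ≤ seqVal q d := this

end SV

/-- weak lexicographic order: at the first difference (if any), `a` is smaller. -/
def Lex01 (a b : ℕ → ℕ) : Prop := ∀ k, (∀ j, j < k → a j = b j) → a k ≤ b k

open Filter Topology

lemma lex01_shift {a b : ℕ → ℕ} (hL : ∀ k, Lex01 (fun x => a (k + x)) b) (i t : ℕ) :
    Lex01 (fun x => (fun y => a (i + y)) (t + x)) b := by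
  have hfun : (fun x => a (i + (t + x))) = (fun x => a (i + t + x)) := by
    funext x; congr 1; omega
  show Lex01 (fun x => a (i + (t + x))) b
  rw [hfun]
  exact hL (i + t)

section Parry
variable {q : ℝ} {α : ℕ → ℕ}

lemma parry_le (hq1 : 1 < q) (hq2 : q < 2) (hα : ∀ i, α i ≤ 1) (hαv : seqVal q α = 1) :
    ∀ (a : ℕ → ℕ), (∀ i, a i ≤ 1) → (∀ k, Lex01 (fun x => a (k + x)) α) →
      seqVal q a ≤ 1 := by
  have hq0 : 0 < q := by linarith
  have hq1' : (0:ℝ) < q - 1 := by linarith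
  have hr1 : (1:ℝ)/q < 1 := by rw [div_lt_one hq0]; linarith
  have hr0 : (0:ℝ) ≤ 1/q := by positivity
  have key : ∀ M : ℕ, ∀ (a : ℕ → ℕ), (∀ i, a i ≤ 1) →
      (∀ k, Lex01 (fun x => a (k + x)) α) →
      seqVal q a ≤ 1 + (1/(q-1)) * (1/q) ^ M := by
    intro M
    induction M with
    | zero =>
      intro a ha hL
      have := sv_le hq1 ha
      have h1 : (0:ℝ) < 1/(q-1) := by positivity
      simp only [pow_zero, mul_one]
      linarith
    | succ M ihM =>
      intro a ha hL
      by_cases hne : a = α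
      · rw [hne, hαv]
        have : (0:ℝ) ≤ (1/(q-1)) * (1/q) ^ (M+1) := by positivity
        linarith
      · have hex : ∃ k, a k ≠ α k := Function.ne_iff.mp hne
        set k := Nat.find hex with hk
        have hkdiff : a k ≠ α k := Nat.find_spec hex
        have hagree : ∀ j, j < k → a j = α j := fun j hj => by
          by_contra hc
          have h2 : k ≤ j := Nat.find_le hc
          omega
        have hak : a k ≤ α k := by
          have := hL 0 k (by simpa using hagree)
          simpa using this
        have hak0 : a k = 0 := by have := hα k; omega
        have hαk1 : α k = 1 := by have := hα k; have := ha k; omega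
        have hsa := sv_split hq1 ha (k+1)
        have hsα := sv_split hq1 hα (k+1)
        have hV : seqVal q (fun x => a (k + 1 + x)) ≤ 1 + (1/(q-1)) * (1/q) ^ M :=
          ihM _ (fun i => ha _) (fun t => lex01_shift hL (k+1) t)
        have hWα : 0 ≤ seqVal q (fun x => α (k + 1 + x)) := sv_nonneg hq1
        have hppos : (0:ℝ) < (1/q)^(k+1) := by positivity
        have hsum : ∑ j ∈ Finset.range (k+1), (a j : ℝ) / q ^ (j+1)
            = ∑ j ∈ Finset.range k, (α j : ℝ) / q ^ (j+1) := by
          rw [Finset.sum_range_succ, hak0]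
          simp only [Nat.cast_zero, zero_div, add_zero]
          exact Finset.sum_congr rfl fun j hj => by
            rw [hagree j (Finset.mem_range.mp hj)]
        have hsumα : ∑ j ∈ Finset.range (k+1), (α j : ℝ) / q ^ (j+1)
            = ∑ j ∈ Finset.range k, (α j : ℝ) / q ^ (j+1) + (1/q)^(k+1) := by
          rw [Finset.sum_range_succ, hαk1]
          simp [div_pow]
        have e1 : seqVal q α = ∑ j ∈ Finset.range k, (α j : ℝ) / q ^ (j+1) + (1/q)^(k+1)
            + (1/q)^(k+1) * seqVal q (fun x => α (k+1+x)) := by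
          rw [hsα, hsumα]
        have hbound : ∑ j ∈ Finset.range k, (α j : ℝ) / q ^ (j+1) + (1/q)^(k+1) ≤ 1 := by
          have h2 : (0:ℝ) ≤ (1/q)^(k+1) * seqVal q (fun x => α (k+1+x)) :=
            mul_nonneg (le_of_lt hppos) hWα
          rw [hαv] at e1
          linarith
        have hpow : ((1:ℝ)/q) ^ (k+1) ≤ (1/q) := by
          calc ((1:ℝ)/q)^(k+1) ≤ (1/q)^1 := by
                apply pow_le_pow_of_le_one hr0 (le_of_lt hr1) (by omega)
            _ = 1/q := pow_one _
        have hC : (0:ℝ) < 1/(q-1) := by positivity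
        calc seqVal q a
            = ∑ j ∈ Finset.range k, (α j : ℝ) / q ^ (j+1)
              + (1/q)^(k+1) * seqVal q (fun x => a (k+1+x)) := by rw [hsa, hsum]
          _ ≤ ∑ j ∈ Finset.range k, (α j : ℝ) / q ^ (j+1)
              + (1/q)^(k+1) * (1 + (1/(q-1)) * (1/q) ^ M) := by
                have h := mul_le_mul_of_nonneg_left hV (le_of_lt hppos)
                linarith
          _ = (∑ j ∈ Finset.range k, (α j : ℝ) / q ^ (j+1) + (1/q)^(k+1))
              + (1/q)^(k+1) * ((1/(q-1)) * (1/q) ^ M) := by ring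
          _ ≤ 1 + (1/q)^(k+1) * ((1/(q-1)) * (1/q) ^ M) := by linarith
          _ ≤ 1 + (1/(q-1)) * (1/q) ^ (M+1) := by
                have h3 : (1/q)^(k+1) * ((1/(q-1)) * (1/q) ^ M)
                    ≤ (1/q) * ((1/(q-1)) * (1/q) ^ M) := by
                  apply mul_le_mul_of_nonneg_right hpow (by positivity)
                have h4 : (1:ℝ)/q * ((1/(q-1)) * (1/q) ^ M) = (1/(q-1)) * (1/q) ^ (M+1) := by
                  ring
                linarith
  intro a ha hL
  by_contra hcon
  push_neg at hcon
  have h0 : Tendsto (fun M : ℕ => 1 + (1/(q-1)) * (1/q) ^ M) atTop (nhds 1) := by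
    have h1 := tendsto_pow_atTop_nhds_zero_of_lt_one hr0 hr1
    have h2 := h1.const_mul (1/(q-1))
    have h3 := h2.const_add 1
    simpa using h3
  have := h0.eventually_lt_const hcon
  obtain ⟨M, hM⟩ := this.exists
  exact absurd (key M a ha hL) (by linarith)

lemma parry_lt (hq1 : 1 < q) (hq2 : q < 2) (hα : ∀ i, α i ≤ 1) (hαv : seqVal q α = 1)
    (hαinf : ∀ k, ∃ j, α (k + j) = 1)
    (a : ℕ → ℕ) (ha : ∀ i, a i ≤ 1) (hL : ∀ k, Lex01 (fun x => a (k + x)) α)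
    (hne : a ≠ α) : seqVal q a < 1 := by
  have hq0 : 0 < q := by linarith
  have hex : ∃ k, a k ≠ α k := Function.ne_iff.mp hne
  set k := Nat.find hex with hk
  have hkdiff : a k ≠ α k := Nat.find_spec hex
  have hagree : ∀ j, j < k → a j = α j := fun j hj => by
    by_contra hc
    have h2 : k ≤ j := Nat.find_le hc
    omega
  have hak : a k ≤ α k := by
    have := hL 0 k (by simpa using hagree)
    simpa using this
  have hak0 : a k = 0 := by have := hα k; omega
  have hαk1 : α k = 1 := by have := hα k; have := ha k; omega
  have hsa := sv_split hq1 ha (k+1)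
  have hsα := sv_split hq1 hα (k+1)
  have hV : seqVal q (fun x => a (k + 1 + x)) ≤ 1 :=
    parry_le hq1 hq2 hα hαv _ (fun i => ha _) (fun t => lex01_shift hL (k+1) t)
  obtain ⟨j, hj⟩ := hαinf (k+1)
  have hW : (1/q) ^ (j+1) ≤ seqVal q (fun x => α (k + 1 + x)) :=
    sv_term_le hq1 (fun i => hα _) hj
  have hWpos : 0 < seqVal q (fun x => α (k + 1 + x)) := by
    have : (0:ℝ) < (1/q)^(j+1) := by positivity
    linarith
  have hsum : ∑ j ∈ Finset.range (k+1), (a j : ℝ) / q ^ (j+1)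
      = ∑ j ∈ Finset.range k, (α j : ℝ) / q ^ (j+1) := by
    rw [Finset.sum_range_succ, hak0]
    simp only [Nat.cast_zero, zero_div, add_zero]
    exact Finset.sum_congr rfl fun j hj => by
      rw [hagree j (Finset.mem_range.mp hj)]
  have hsumα : ∑ j ∈ Finset.range (k+1), (α j : ℝ) / q ^ (j+1)
      = ∑ j ∈ Finset.range k, (α j : ℝ) / q ^ (j+1) + (1/q)^(k+1) := by
    rw [Finset.sum_range_succ, hαk1]
    simp [div_pow]
  have hppos : (0:ℝ) < (1/q)^(k+1) := by positivity
  have e1 : seqVal q α = ∑ j ∈ Finset.range k, (α j : ℝ) / q ^ (j+1) + (1/q)^(k+1)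
      + (1/q)^(k+1) * seqVal q (fun x => α (k+1+x)) := by
    rw [hsα, hsumα]
  rw [hαv] at e1
  have h2 : 0 < (1/q)^(k+1) * seqVal q (fun x => α (k+1+x)) := mul_pos hppos hWpos
  have h3 : (1/q)^(k+1) * seqVal q (fun x => a (k+1+x)) ≤ (1/q)^(k+1) * 1 :=
    mul_le_mul_of_nonneg_left hV (le_of_lt hppos)
  rw [hsa, hsum]
  linarith

end Parry

section DA
variable {τ : ℕ → ℕ} {m e i j k s x y : ℕ}

/-- the digit sequence of `z_n` (prefix `τ_1…τ_m`, then period `τ_{m+1}…τ_{2m}`). -/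
def dSeq (τ : ℕ → ℕ) (m : ℕ) : ℕ → ℕ := fun j =>
  if j < m then τ (j + 1) else τ (m + (j - m) % m + 1)

/-- the quasi-greedy expansion of 1 in base `q_n`: `(τ_1 … τ_{2m-1} 0)^∞`. -/
def alphaSeq (τ : ℕ → ℕ) (m : ℕ) : ℕ → ℕ := fun k =>
  if k % (2 * m) = 2 * m - 1 then 0 else τ (k % (2 * m) + 1)

section DA

variable {τ : ℕ → ℕ} {m e : ℕ}

lemma two_le_m (hm : m = 2 ^ e) (he : 1 ≤ e) : 2 ≤ m := by
  rw [hm]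
  calc 2 = 2 ^ 1 := rfl
    _ ≤ 2 ^ e := Nat.pow_le_pow_right (by norm_num) he

lemma d_le_one (hτ : IsThueMorse τ) : ∀ j, dSeq τ m j ≤ 1 := by
  intro j
  unfold dSeq
  split <;> exact tau_le_one hτ _

lemma alpha_le_one (hτ : IsThueMorse τ) : ∀ k, alphaSeq τ m k ≤ 1 := by
  intro k
  unfold alphaSeq
  split
  · omega
  · exact tau_le_one hτ _

lemma d_lt (h2 : 1 ≤ m) (hj : j < 2 * m) : dSeq τ m j = τ (j + 1) := by
  unfold dSeq
  split
  · rfl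
  · have h1 : (j - m) % m = j - m := Nat.mod_eq_of_lt (by omega)
    rw [h1]
    congr 2
    omega

lemma d_per (h2 : 1 ≤ m) (hy : m ≤ y) : dSeq τ m (y + m) = dSeq τ m y := by
  unfold dSeq
  rw [if_neg (by omega), if_neg (by omega)]
  congr 2
  have : y + m - m = y - m + m := by omega
  rw [this, Nat.add_mod_right]

lemma alpha_per (h2 : 1 ≤ m) (k : ℕ) : alphaSeq τ m (k + 2 * m) = alphaSeq τ m k := by
  unfold alphaSeq
  rw [Nat.add_mod_right]

lemma alpha_lt (h2 : 1 ≤ m) (hk : k < 2 * m - 1) : alphaSeq τ m k = τ (k + 1) := by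
  unfold alphaSeq
  rw [Nat.mod_eq_of_lt (by omega), if_neg (by omega)]

lemma alpha_last (h2 : 1 ≤ m) : alphaSeq τ m (2 * m - 1) = 0 := by
  unfold alphaSeq
  rw [Nat.mod_eq_of_lt (by omega), if_pos rfl]

lemma tau_m (hτ : IsThueMorse τ) (hm : m = 2 ^ e) : τ m = 1 := by rw [hm]; exact tau_pow2 hτ e

lemma tau_2m (hτ : IsThueMorse τ) (hm : m = 2 ^ e) : τ (2 * m) = 1 := by
  have : 2 * m = 2 ^ (e + 1) := by rw [hm]; ring
  rw [this]; exact tau_pow2 hτ (e + 1)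

lemma compl_m (hτ : IsThueMorse τ) (hm : m = 2 ^ e) (hs : s < m) : τ (m + s) + τ s = 1 := by
  subst hm; exact tau_compl hτ e s hs

lemma compl_2m (hτ : IsThueMorse τ) (hm : m = 2 ^ e) (hs : s < 2 * m) :
    τ (2 * m + s) + τ s = 1 := by
  have h : 2 * m = 2 ^ (e + 1) := by rw [hm]; ring
  rw [h]
  exact tau_compl hτ (e + 1) s (by omega)

/-- within the prefix and one more period, `dSeq` looks like the TM sequence. -/
lemma d_tau (hτ : IsThueMorse τ) (hm : m = 2 ^ e) (he : 1 ≤ e) (hx : x ≤ 3 * m - 2) :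
    dSeq τ m x = τ (x + 1) := by
  have h2 : 2 ≤ m := two_le_m hm he
  rcases Nat.lt_or_ge x (2 * m) with h | h
  · exact d_lt (by omega) h
  · -- 2m ≤ x ≤ 3m - 2
    have h1 : dSeq τ m x = dSeq τ m (x - m) := by
      have := d_per (τ := τ) (by omega : 1 ≤ m) (by omega : m ≤ x - m)
      rw [show x - m + m = x by omega] at this
      exact this
    rw [h1, d_lt (by omega) (by omega)]
    have hs1 : x - 2 * m + 1 < m := by omega
    have c1 := compl_m hτ hm hs1
    have c2 := compl_2m hτ hm (s := x - 2 * m + 1) (by omega)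
    rw [show x - m + 1 = m + (x - 2 * m + 1) by omega]
    rw [show x + 1 = 2 * m + (x - 2 * m + 1) by omega]
    omega

lemma g1 (hτ : IsThueMorse τ) (hm : m = 2 ^ e) (he : 1 ≤ e) :
    ∀ N i k, i + k ≤ N → 1 ≤ i → (∀ j, j < k → dSeq τ m (i + j) = alphaSeq τ m j) →
      dSeq τ m (i + k) ≤ alphaSeq τ m k := by
  have h2 : 2 ≤ m := two_le_m hm he
  intro N
  induction N with
  | zero => intro i k h h1 _; omega
  | succ N ih =>
    intro i k hik hi H
    rcases Nat.lt_or_ge i (2 * m) with hilt | hige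
    · rcases Nat.lt_or_ge k (2 * m) with hklt | hkge
      · -- terminal cases
        rcases Nat.lt_or_ge i m with hi1 | hi2
        · -- 1 ≤ i < m
          rcases Nat.lt_or_ge k (2 * m - 1) with hk1 | hk2
          · -- main case: use lexD
            have hd : dSeq τ m (i + k) = τ (i + k + 1) := d_tau hτ hm he (by omega)
            have hα : alphaSeq τ m k = τ (k + 1) := alpha_lt (by omega) hk1
            rw [hd, hα]
            have := lexD hτ i hi (k + 1) (by omega) (fun s hs1 hs2 => by
              have hH := H (s - 1) (by omega)
              rw [d_tau hτ hm he (by omega), alpha_lt (by omega) (by omega)] at hH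
              rw [show i + (s-1) + 1 = i + s by omega, show s - 1 + 1 = s by omega] at hH
              exact hH)
            rw [show i + (k + 1) = i + k + 1 by omega] at this
            exact this
          · -- k = 2m - 1 : contradiction
            exfalso
            have hk : k = 2 * m - 1 := by omega
            have hH1 := H (m - i - 1) (by omega)
            have hH2 := H (2 * m - i - 1) (by omega)
            rw [d_tau hτ hm he (by omega), alpha_lt (by omega) (by omega)] at hH1
            rw [d_tau hτ hm he (by omega), alpha_lt (by omega) (by omega)] at hH2
            rw [show i + (m - i - 1) + 1 = m by omega, show m - i - 1 + 1 = m - i by omega] at hH1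
            rw [show i + (2 * m - i - 1) + 1 = 2 * m by omega,
              show 2 * m - i - 1 + 1 = 2 * m - i by omega] at hH2
            have hτm := tau_m hτ hm
            have hτ2m := tau_2m hτ hm
            have hc := compl_m hτ hm (s := m - i) (by omega)
            rw [show m + (m - i) = 2 * m - i by omega] at hc
            omega
        · -- m ≤ i < 2m
          rcases Nat.lt_or_ge m k with hk1 | hk2
          · -- k > m : contradiction
            exfalso
            have hH0 := H 0 (by omega)
            have hHm := H m (by omega)
            have hdm : dSeq τ m (i + m) = dSeq τ m i := by
              have := d_per (τ := τ) (by omega : 1 ≤ m) (by omega : m ≤ i)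
              rw [show i + m = i + m by rfl]
              exact this
            rw [add_zero] at hH0
            rw [hdm, hH0] at hHm
            have hα0 : alphaSeq τ m 0 = τ 1 := alpha_lt (by omega) (by omega)
            have hαm : alphaSeq τ m m = τ (m + 1) := alpha_lt (by omega) (by omega)
            have hc := compl_m hτ hm (s := 1) (by omega)
            have ht1 := tau_one hτ
            rw [hα0, hαm] at hHm
            omega
          · -- k ≤ m
            rcases Nat.lt_or_ge (i + k) (3 * m - 1) with hik1 | hik2
            · -- use lexD
              have hd : dSeq τ m (i + k) = τ (i + k + 1) := d_tau hτ hm he (by omega)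
              have hα : alphaSeq τ m k = τ (k + 1) := alpha_lt (by omega) (by omega)
              rw [hd, hα]
              have := lexD hτ i hi (k + 1) (by omega) (fun s hs1 hs2 => by
                have hH := H (s - 1) (by omega)
                rw [d_tau hτ hm he (by omega), alpha_lt (by omega) (by omega)] at hH
                rw [show i + (s-1) + 1 = i + s by omega, show s - 1 + 1 = s by omega] at hH
                exact hH)
              rw [show i + (k + 1) = i + k + 1 by omega] at this
              exact this
            · -- i = 2m-1, k = m : contradiction via H 1
              exfalso
              have hieq : i = 2 * m - 1 := by omega
              have hkeq : k = m := by omega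
              have hH1 := H 1 (by omega)
              have hd1 : dSeq τ m (i + 1) = τ (m + 1) := by
                rw [show i + 1 = m + m by omega]
                have := d_per (τ := τ) (by omega : 1 ≤ m) (le_refl m)
                rw [this, d_lt (by omega) (by omega)]
              have hα1 : alphaSeq τ m 1 = τ 2 := alpha_lt (by omega) (by omega)
              have hc := compl_m hτ hm (s := 1) (by omega)
              have ht1 := tau_one hτ
              have ht2 := tau_two hτ
              rw [hd1, hα1] at hH1
              omega
      · -- k ≥ 2m : period reduction on k
        have key := ih (i + m) (k - 2 * m) (by omega) (by omega) (fun j hj => by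
          have hH := H (2 * m + j) (by omega)
          have hd' : dSeq τ m (i + m + j + m) = dSeq τ m (i + m + j) :=
            d_per (by omega) (by omega)
          rw [show i + (2 * m + j) = i + m + j + m by omega] at hH
          rw [hd'] at hH
          rw [show (2:ℕ) * m + j = j + 2 * m by omega, alpha_per (by omega)] at hH
          exact hH)
        have hd' : dSeq τ m (i + m + (k - 2 * m) + m) = dSeq τ m (i + m + (k - 2 * m)) :=
          d_per (by omega) (by omega)
        rw [show i + m + (k - 2 * m) + m = i + k by omega] at hd'
        have hα' : alphaSeq τ m (k - 2 * m + 2 * m) = alphaSeq τ m (k - 2 * m) :=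
          alpha_per (by omega) _
        rw [show k - 2 * m + 2 * m = k by omega] at hα'
        rw [hd', hα']
        exact key
    · -- i ≥ 2m : reduce i
      have key := ih (i - m) k (by omega) (by omega) (fun j hj => by
        have hd' : dSeq τ m (i - m + j + m) = dSeq τ m (i - m + j) := d_per (by omega) (by omega)
        rw [show i - m + j + m = i + j by omega] at hd'
        rw [← hd']
        exact H j hj)
      have hd' : dSeq τ m (i - m + k + m) = dSeq τ m (i - m + k) := d_per (by omega) (by omega)
      rw [show i - m + k + m = i + k by omega] at hd'
      rw [hd']
      exact key


lemma g2 (hτ : IsThueMorse τ) (hm : m = 2 ^ e) (he : 1 ≤ e) :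
    ∀ N i k, i + k ≤ N → 1 ≤ i → (∀ j, j < k → dSeq τ m (i + j) + alphaSeq τ m j = 1) →
      1 ≤ dSeq τ m (i + k) + alphaSeq τ m k := by
  have h2 : 2 ≤ m := two_le_m hm he
  intro N
  induction N with
  | zero => intro i k h h1 _; omega
  | succ N ih =>
    intro i k hik hi H
    rcases Nat.lt_or_ge i (2 * m) with hilt | hige
    · rcases Nat.lt_or_ge k (2 * m) with hklt | hkge
      · rcases Nat.lt_or_ge i m with hi1 | hi2
        · -- 1 ≤ i < m
          rcases Nat.lt_or_ge k (2 * m - 1) with hk1 | hk2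
          · have hd : dSeq τ m (i + k) = τ (i + k + 1) := d_tau hτ hm he (by omega)
            have hα : alphaSeq τ m k = τ (k + 1) := alpha_lt (by omega) hk1
            rw [hd, hα]
            have := lexE hτ i hi (k + 1) (by omega) (fun s hs1 hs2 => by
              have hH := H (s - 1) (by omega)
              rw [d_tau hτ hm he (by omega), alpha_lt (by omega) (by omega)] at hH
              rw [show i + (s-1) + 1 = i + s by omega, show s - 1 + 1 = s by omega] at hH
              exact hH)
            rw [show i + (k + 1) = i + k + 1 by omega] at this
            exact this
          · exfalso
            have hk : k = 2 * m - 1 := by omega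
            have hH1 := H (m - i - 1) (by omega)
            have hH2 := H (2 * m - i - 1) (by omega)
            rw [d_tau hτ hm he (by omega), alpha_lt (by omega) (by omega)] at hH1
            rw [d_tau hτ hm he (by omega), alpha_lt (by omega) (by omega)] at hH2
            rw [show i + (m - i - 1) + 1 = m by omega, show m - i - 1 + 1 = m - i by omega] at hH1
            rw [show i + (2 * m - i - 1) + 1 = 2 * m by omega,
              show 2 * m - i - 1 + 1 = 2 * m - i by omega] at hH2
            have hτm := tau_m hτ hm
            have hτ2m := tau_2m hτ hm
            have hc := compl_m hτ hm (s := m - i) (by omega)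
            rw [show m + (m - i) = 2 * m - i by omega] at hc
            omega
        · -- m ≤ i < 2m
          rcases Nat.lt_or_ge m k with hk1 | hk2
          · exfalso
            have hH0 := H 0 (by omega)
            have hHm := H m (by omega)
            have hdm : dSeq τ m (i + m) = dSeq τ m i :=
              d_per (by omega) (by omega)
            rw [add_zero] at hH0
            rw [hdm] at hHm
            have hα0 : alphaSeq τ m 0 = τ 1 := alpha_lt (by omega) (by omega)
            have hαm : alphaSeq τ m m = τ (m + 1) := alpha_lt (by omega) (by omega)
            have hc := compl_m hτ hm (s := 1) (by omega)
            have ht1 := tau_one hτ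
            rw [hα0] at hH0
            rw [hαm] at hHm
            omega
          · rcases Nat.lt_or_ge (i + k) (3 * m - 1) with hik1 | hik2
            · have hd : dSeq τ m (i + k) = τ (i + k + 1) := d_tau hτ hm he (by omega)
              have hα : alphaSeq τ m k = τ (k + 1) := alpha_lt (by omega) (by omega)
              rw [hd, hα]
              have := lexE hτ i hi (k + 1) (by omega) (fun s hs1 hs2 => by
                have hH := H (s - 1) (by omega)
                rw [d_tau hτ hm he (by omega), alpha_lt (by omega) (by omega)] at hH
                rw [show i + (s-1) + 1 = i + s by omega, show s - 1 + 1 = s by omega] at hH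
                exact hH)
              rw [show i + (k + 1) = i + k + 1 by omega] at this
              exact this
            · exfalso
              have hieq : i = 2 * m - 1 := by omega
              have hkeq : k = m := by omega
              have hH0 := H 0 (by omega)
              rw [add_zero] at hH0
              have hd0 : dSeq τ m i = τ (2 * m) := by
                rw [d_lt (by omega) (by omega)]
                congr 1
                omega
              have hα0 : alphaSeq τ m 0 = τ 1 := alpha_lt (by omega) (by omega)
              have ht1 := tau_one hτ
              have hτ2m := tau_2m hτ hm
              rw [hd0, hα0] at hH0
              omega
      · -- k ≥ 2m
        have key := ih (i + m) (k - 2 * m) (by omega) (by omega) (fun j hj => by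
          have hH := H (2 * m + j) (by omega)
          have hd' : dSeq τ m (i + m + j + m) = dSeq τ m (i + m + j) :=
            d_per (by omega) (by omega)
          rw [show i + (2 * m + j) = i + m + j + m by omega] at hH
          rw [hd'] at hH
          rw [show (2:ℕ) * m + j = j + 2 * m by omega, alpha_per (by omega)] at hH
          exact hH)
        have hd' : dSeq τ m (i + m + (k - 2 * m) + m) = dSeq τ m (i + m + (k - 2 * m)) :=
          d_per (by omega) (by omega)
        rw [show i + m + (k - 2 * m) + m = i + k by omega] at hd'
        have hα' : alphaSeq τ m (k - 2 * m + 2 * m) = alphaSeq τ m (k - 2 * m) :=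
          alpha_per (by omega) _
        rw [show k - 2 * m + 2 * m = k by omega] at hα'
        rw [hd', hα']
        exact key
    · -- i ≥ 2m
      have key := ih (i - m) k (by omega) (by omega) (fun j hj => by
        have hd' : dSeq τ m (i - m + j + m) = dSeq τ m (i - m + j) := d_per (by omega) (by omega)
        rw [show i - m + j + m = i + j by omega] at hd'
        rw [← hd']
        exact H j hj)
      have hd' : dSeq τ m (i - m + k + m) = dSeq τ m (i - m + k) := d_per (by omega) (by omega)
      rw [show i - m + k + m = i + k by omega] at hd'
      rw [hd']
      exact key

/-- `alphaSeq` is not eventually `m`-periodic. -/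
lemma alpha_not_mper (hτ : IsThueMorse τ) (hm : m = 2 ^ e) (he : 1 ≤ e)
    (h : ∀ x, m ≤ x → alphaSeq τ m (x + m) = alphaSeq τ m x) : False := by
  have h2 : 2 ≤ m := two_le_m hm he
  have h0 : alphaSeq τ m 0 = τ 1 := alpha_lt (by omega) (by omega)
  have hmm : alphaSeq τ m m = τ (m + 1) := alpha_lt (by omega) (by omega)
  have e1 : alphaSeq τ m (0 + 2 * m) = alphaSeq τ m 0 := alpha_per (by omega) 0
  have e2 : alphaSeq τ m (m + m) = alphaSeq τ m m := h m (le_refl m)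
  rw [show (0:ℕ) + 2 * m = m + m by omega] at e1
  have hc := compl_m hτ hm (s := 1) (by omega)
  have ht1 := tau_one hτ
  omega

/-- the shifted `dSeq` never equals `alphaSeq`. -/
lemma d_ne_alpha (hτ : IsThueMorse τ) (hm : m = 2 ^ e) (he : 1 ≤ e) (hi : 1 ≤ i)
    (h : ∀ x, dSeq τ m (i + x) = alphaSeq τ m x) : False := by
  have h2 : 2 ≤ m := two_le_m hm he
  apply alpha_not_mper hτ hm he
  intro x hx
  have hd : dSeq τ m (i + x + m) = dSeq τ m (i + x) := d_per (by omega) (by omega)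
  have := h (x + m)
  rw [show i + (x + m) = i + x + m by omega, hd, h x] at this
  omega

/-- the reflected shifted `dSeq` never equals `alphaSeq`. -/
lemma d_ne_alpha' (hτ : IsThueMorse τ) (hm : m = 2 ^ e) (he : 1 ≤ e) (hi : 1 ≤ i)
    (h : ∀ x, dSeq τ m (i + x) + alphaSeq τ m x = 1) : False := by
  have h2 : 2 ≤ m := two_le_m hm he
  apply alpha_not_mper hτ hm he
  intro x hx
  have hd : dSeq τ m (i + x + m) = dSeq τ m (i + x) := d_per (by omega) (by omega)
  have := h (x + m)
  rw [show i + (x + m) = i + x + m by omega, hd] at this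
  have := h x
  omega

/-- every residue class of `alphaSeq` contains a digit `1` ahead. -/
lemma alpha_inf (hτ : IsThueMorse τ) (hm : m = 2 ^ e) (he : 1 ≤ e) (k : ℕ) :
    ∃ j, alphaSeq τ m (k + j) = 1 := by
  have h2 : 2 ≤ m := two_le_m hm he
  refine ⟨2 * m * (k + 1) - k, ?_⟩
  have ht1 := tau_one hτ
  have hle : k ≤ 2 * m * (k + 1) := by
    calc k ≤ 2 * (k + 1) := by omega
      _ ≤ 2 * m * (k + 1) := by
          apply Nat.mul_le_mul_right
          omega
  have hmod : (k + (2 * m * (k + 1) - k)) % (2 * m) = 0 := by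
    rw [show k + (2 * m * (k + 1) - k) = 2 * m * (k + 1) by omega, Nat.mul_mod_right]
  unfold alphaSeq
  rw [hmod, if_neg (by omega)]
  exact ht1

end DA

section Main
variable {τ : ℕ → ℕ}

lemma d_one (hτ : IsThueMorse τ) (j : ℕ) : dSeq τ 1 j = 1 := by
  unfold dSeq
  split
  · have : j = 0 := by omega
    rw [this]; exact tau_one hτ
  · simp only [Nat.mod_one]
    exact tau_two hτ

lemma prefPeriodic_eq_dSeq (τ : ℕ → ℕ) (m : ℕ) (hm : 1 ≤ m) :
    prefPeriodic (tmPrefix τ m) ((List.range m).map fun i => τ (m + (i + 1))) = dSeq τ m := by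
  funext j
  have hlen1 : (tmPrefix τ m).length = m := by simp [tmPrefix]
  have hlen2 : ((List.range m).map fun i => τ (m + (i + 1))).length = m := by simp
  unfold prefPeriodic dSeq
  rw [hlen1, hlen2]
  by_cases hj : j < m
  · rw [if_pos hj, if_pos hj]
    rw [tmPrefix]
    rw [List.getD_eq_getElem?_getD, List.getElem?_map, List.getElem?_range hj]
    rfl
  · rw [if_neg hj, if_neg hj]
    have hr : (j - m) % m < m := Nat.mod_lt _ (by omega)
    rw [List.getD_eq_getElem?_getD, List.getElem?_map, List.getElem?_range hr]
    show τ (m + ((j - m) % m + 1)) = τ (m + (j - m) % m + 1)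
    congr 1

/-- `g1` packaged as a `Lex01` statement for all shifts of a tail. -/
lemma g1L (hτ : IsThueMorse τ) {m e : ℕ} (hm : m = 2 ^ e) (he : 1 ≤ e) (i : ℕ) (hi : 1 ≤ i) :
    ∀ k, Lex01 (fun x => (fun y => dSeq τ m (i + y)) (k + x)) (alphaSeq τ m) := by
  intro k k' H
  show dSeq τ m (i + (k + k')) ≤ alphaSeq τ m k'
  have H' : ∀ j, j < k' → dSeq τ m (i + k + j) = alphaSeq τ m j := by
    intro j hj
    have h2 : dSeq τ m (i + (k + j)) = alphaSeq τ m j := H j hj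
    rw [show i + (k + j) = i + k + j from by omega] at h2
    exact h2
  have hg := g1 hτ hm he (i + k + k') (i + k) k' le_rfl (by omega) H'
  rw [show i + (k + k') = i + k + k' from by omega]
  exact hg

/-- `g2` packaged as a `Lex01` statement for all shifts of a reflected tail. -/
lemma g2L (hτ : IsThueMorse τ) {m e : ℕ} (hm : m = 2 ^ e) (he : 1 ≤ e) (i : ℕ) (hi : 1 ≤ i) :
    ∀ k, Lex01 (fun x => (fun y => 1 - dSeq τ m (i + y)) (k + x)) (alphaSeq τ m) := by
  intro k k' H
  show 1 - dSeq τ m (i + (k + k')) ≤ alphaSeq τ m k'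
  have H' : ∀ j, j < k' → dSeq τ m (i + k + j) + alphaSeq τ m j = 1 := by
    intro j hj
    have h2 : 1 - dSeq τ m (i + (k + j)) = alphaSeq τ m j := H j hj
    rw [show i + (k + j) = i + k + j from by omega] at h2
    have h3 := d_le_one (m := m) hτ (i + k + j)
    have h4 := alpha_le_one (m := m) hτ j
    omega
  have hg := g2 hτ hm he (i + k + k') (i + k) k' le_rfl (by omega) H'
  rw [show i + (k + k') = i + k + k' from by omega]
  have h3 := d_le_one (m := m) hτ (i + k + k')
  have h4 := alpha_le_one (m := m) hτ k'
  omega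

/-- value of the quasi-greedy sequence `alphaSeq` is 1 in base `q_n`. -/
lemma alpha_val (hτ : IsThueMorse τ) {q : ℝ} {m e : ℕ} (hm : m = 2 ^ e) (he : 1 ≤ e)
    (hq1 : 1 < q)
    (heq : (1:ℝ) = ∑ i ∈ Finset.range (2 * m), (τ (i + 1) : ℝ) / q ^ (i + 1)) :
    seqVal q (alphaSeq τ m) = 1 := by
  have h2 : 2 ≤ m := two_le_m hm he
  have hq0 : 0 < q := by linarith
  have hαle := alpha_le_one (m := m) hτ
  have hper : ∀ i : ℕ, alphaSeq τ m (i + 2 * m) = alphaSeq τ m i := alpha_per (by omega)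
  have hpval := sv_periodic hq1 hαle (by omega : 1 ≤ 2 * m) hper
  have e0 : ∑ j ∈ Finset.range (2 * m), (τ (j + 1) : ℝ) / q ^ (j + 1) = 1 := heq.symm
  have hsum : ∑ j ∈ Finset.range (2 * m), (alphaSeq τ m j : ℝ) / q ^ (j + 1)
      = 1 - (1/q) ^ (2 * m) := by
    rw [show 2 * m = (2 * m - 1) + 1 by omega, Finset.sum_range_succ] at e0 ⊢
    have hcong : ∑ j ∈ Finset.range (2 * m - 1), (alphaSeq τ m j : ℝ) / q ^ (j + 1)
        = ∑ j ∈ Finset.range (2 * m - 1), (τ (j + 1) : ℝ) / q ^ (j + 1) := by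
      refine Finset.sum_congr rfl fun j hj => ?_
      rw [alpha_lt (by omega) (Finset.mem_range.mp hj)]
    have ht2m : τ (2 * m - 1 + 1) = 1 := by
      rw [show 2 * m - 1 + 1 = 2 * m by omega]; exact tau_2m hτ hm
    rw [ht2m] at e0
    rw [hcong, alpha_last (by omega)]
    have hT : ((1:ℝ)/q) ^ (2 * m - 1 + 1) = 1 / q ^ (2 * m - 1 + 1) := by
      rw [div_pow, one_pow]
    rw [hT]
    push_cast at e0 ⊢
    rw [zero_div, add_zero]
    linarith [e0]
  rw [hpval, hsum]
  have hTlt : ((1:ℝ)/q) ^ (2 * m) < 1 := by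
    apply pow_lt_one₀ (by positivity) (by rw [div_lt_one hq0]; linarith) (by omega)
  exact div_self (by linarith)

/-- the value of the digit sequence of `z_n`. -/
lemma zVal_formula (hτ : IsThueMorse τ) {q : ℝ} {m e : ℕ} (hm : m = 2 ^ e) (hq1 : 1 < q)
    (heq : (1:ℝ) = ∑ i ∈ Finset.range (2 * m), (τ (i + 1) : ℝ) / q ^ (i + 1)) :
    seqVal q (dSeq τ m) = 1 + (2 - q) / ((q - 1) * q ^ m * (q ^ m - 1)) := by
  have hm1 : 1 ≤ m := by rw [hm]; exact Nat.one_le_two_pow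
  have hq0 : 0 < q := by linarith
  have hd := d_le_one (m := m) hτ
  have hqne : q ≠ 0 := by linarith
  have hq1ne : q - 1 ≠ 0 := by linarith
  set u : ℝ := q ^ m with hudef
  have hu1 : 1 < u := one_lt_pow₀ hq1 (by omega)
  have hune : u ≠ 0 := by linarith
  have hum1 : u - 1 ≠ 0 := by linarith
  have ht : ((1:ℝ)/q) ^ m = 1 / u := by rw [div_pow, one_pow]
  have htlt : ((1:ℝ)/q) ^ m < 1 := by rw [ht, div_lt_one (by linarith)]; linarith
  have htpos : (0:ℝ) < (1/q) ^ m := by positivity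
  have htne : (1:ℝ) - (1/q) ^ m ≠ 0 := by linarith
  -- split the value at the end of the prefix
  have hsplit := sv_split hq1 hd m
  have hVd : ∀ i : ℕ, (fun x => dSeq τ m (m + x)) i ≤ 1 := fun i => hd _
  have hVper : ∀ i : ℕ, (fun x => dSeq τ m (m + x)) (i + m) = (fun x => dSeq τ m (m + x)) i := by
    intro i
    show dSeq τ m (m + (i + m)) = dSeq τ m (m + i)
    rw [show m + (i + m) = (m + i) + m by omega]
    exact d_per (by omega) (by omega)
  have hV := sv_periodic hq1 hVd hm1 hVper
  -- split the defining equation of q_n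
  rw [show 2 * m = m + m by ring, Finset.sum_range_add] at heq
  have hfirst : ∑ i ∈ Finset.range m, (τ (i + 1) : ℝ) / q ^ (i + 1)
      = ∑ j ∈ Finset.range m, (dSeq τ m j : ℝ) / q ^ (j + 1) := by
    refine Finset.sum_congr rfl fun j hj => ?_
    rw [d_lt (by omega) (by have := Finset.mem_range.mp hj; omega)]
  have hsecond : ∑ i ∈ Finset.range m, (τ (m + i + 1) : ℝ) / q ^ (m + i + 1)
      = (1/q) ^ m * ∑ j ∈ Finset.range m, (dSeq τ m (m + j) : ℝ) / q ^ (j + 1) := by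
    rw [Finset.mul_sum]
    refine Finset.sum_congr rfl fun j hj => ?_
    have hjm : j < m := Finset.mem_range.mp hj
    rw [d_lt (by omega) (by omega : m + j < 2 * m), ht,
      show m + j + 1 = m + (j + 1) by omega, pow_add, ← hudef]
    have h1 : (q:ℝ) ^ (j+1) ≠ 0 := by positivity
    field_simp
  rw [hfirst, hsecond] at heq
  -- the one-period sum of the tail
  have hterm : ∀ j ∈ Finset.range m,
      ((dSeq τ m (m + j) : ℝ) / q ^ (j + 1) + (dSeq τ m j : ℝ) / q ^ (j + 1))
      = 1 / q ^ (j + 1) + (if j = m - 1 then 1 / q ^ (j + 1) else 0) := by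
    intro j hj
    have hjm : j < m := Finset.mem_range.mp hj
    by_cases hlast : j = m - 1
    · subst hlast
      have hd1 : dSeq τ m (m + (m - 1)) = 1 := by
        rw [show m + (m - 1) = 2 * m - 1 by omega, d_lt (by omega) (by omega),
          show 2 * m - 1 + 1 = 2 * m by omega]
        exact tau_2m hτ hm
      have hd2 : dSeq τ m (m - 1) = 1 := by
        rw [d_lt (by omega) (by omega), show m - 1 + 1 = m by omega]
        exact tau_m hτ hm
      rw [hd1, hd2, if_pos rfl]
      push_cast
      ring
    · have hjlt : j < m - 1 := by omega
      have hd1 : dSeq τ m (m + j) = τ (m + j + 1) := d_lt (by omega) (by omega)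
      have hd2 : dSeq τ m j = τ (j + 1) := d_lt (by omega) (by omega)
      have hc := compl_m (s := j + 1) hτ hm (by omega)
      rw [show m + (j + 1) = m + j + 1 by omega] at hc
      have hcR : (τ (m + j + 1) : ℝ) + (τ (j + 1) : ℝ) = 1 := by exact_mod_cast hc
      rw [hd1, hd2, if_neg hlast]
      rw [← add_div, hcR, add_zero]
  have hWP : ∑ j ∈ Finset.range m, (dSeq τ m (m + j) : ℝ) / q ^ (j + 1)
      + ∑ j ∈ Finset.range m, (dSeq τ m j : ℝ) / q ^ (j + 1)
      = (1 - 1 / u) / (q - 1) + 1 / u := by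
    rw [← Finset.sum_add_distrib]
    rw [Finset.sum_congr rfl hterm, Finset.sum_add_distrib]
    have hgeom : ∑ j ∈ Finset.range m, (1:ℝ) / q ^ (j + 1) = (1 - 1 / u) / (q - 1) := by
      have hne1 : (1:ℝ)/q ≠ 1 := by
        intro h
        rw [div_eq_one_iff_eq hqne] at h
        linarith
      have hg := geom_sum_eq hne1 m
      have hstep : ∑ j ∈ Finset.range m, (1:ℝ) / q ^ (j + 1)
          = (∑ j ∈ Finset.range m, ((1:ℝ)/q) ^ j) * (1/q) := by
        rw [Finset.sum_mul]
        refine Finset.sum_congr rfl fun j hj => ?_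
        rw [← pow_succ, div_pow, one_pow]
      rw [hstep, hg, ht]
      have hd1 : (1:ℝ)/q - 1 ≠ 0 := by
        intro h
        have : (1:ℝ)/q = 1 := by linarith
        rw [div_eq_one_iff_eq hqne] at this
        linarith
      rw [div_mul_eq_mul_div, div_eq_div_iff hd1 hq1ne]
      field_simp
      ring
    have hite : ∑ j ∈ Finset.range m, (if j = m - 1 then (1:ℝ) / q ^ (j + 1) else 0)
        = 1 / u := by
      rw [Finset.sum_ite_eq' (Finset.range m) (m - 1) (fun j => (1:ℝ) / q ^ (j + 1))]
      rw [if_pos (Finset.mem_range.mpr (by omega))]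
      rw [show m - 1 + 1 = m by omega]
    rw [hgeom, hite]
  -- now solve
  set W := ∑ j ∈ Finset.range m, (dSeq τ m (m + j) : ℝ) / q ^ (j + 1) with hWdef
  set P := ∑ j ∈ Finset.range m, (dSeq τ m j : ℝ) / q ^ (j + 1) with hPdef
  rw [ht] at heq hV
  have hune' : (1:ℝ) - 1 / u ≠ 0 := by
    rw [ht] at htlt
    linarith
  have hW : W = (2 - q) / (q - 1) := by
    have h5 : W * (1 - 1 / u) = (1 - 1 / u) / (q - 1) + 1 / u - 1 := by
      linear_combination hWP + heq
    apply mul_right_cancel₀ hune'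
    rw [h5]
    field_simp
    ring
  have hP : P = 1 - 1 / u * ((2 - q) / (q - 1)) := by
    rw [← hW]
    linear_combination -heq
  rw [hsplit, ht, hV, hP, hW]
  field_simp
  ring

/-- uniqueness of the expansion of `z_n` in base `q_n`. -/
lemma expansion_unique (hτ : IsThueMorse τ) {q : ℝ} {m e : ℕ} (hm : m = 2 ^ e)
    (hq1 : 1 < q) (hq2 : q < 2)
    (heq : (1:ℝ) = ∑ i ∈ Finset.range (2 * m), (τ (i + 1) : ℝ) / q ^ (i + 1)) :
    ∀ ee : ℕ → ℕ, IsExpansion q (seqVal q (dSeq τ m)) ee → ee = dSeq τ m := by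
  have hq0 : 0 < q := by linarith
  have hd := d_le_one (m := m) hτ
  rintro ee ⟨hee1, hee2⟩
  by_contra hne
  have hex : ∃ j, ee j ≠ dSeq τ m j := Function.ne_iff.mp hne
  set J := Nat.find hex with hJ
  have hJdiff : ee J ≠ dSeq τ m J := Nat.find_spec hex
  have hagree : ∀ j, j < J → ee j = dSeq τ m j := fun j hj => by
    by_contra hc
    have h2 : J ≤ j := Nat.find_le hc
    omega
  have hsd := sv_split hq1 hd (J + 1)
  have hse := sv_split hq1 hee1 (J + 1)
  rw [Finset.sum_range_succ] at hsd hse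
  have hpre : ∑ j ∈ Finset.range J, (ee j : ℝ) / q ^ (j + 1)
      = ∑ j ∈ Finset.range J, (dSeq τ m j : ℝ) / q ^ (j + 1) := by
    refine Finset.sum_congr rfl fun j hj => ?_
    rw [hagree j (Finset.mem_range.mp hj)]
  set Vd := seqVal q (fun x => dSeq τ m (J + 1 + x)) with hVddef
  set Ve := seqVal q (fun x => ee (J + 1 + x)) with hVedef
  have hkey : (ee J : ℝ) / q ^ (J + 1) + (1/q) ^ (J + 1) * Ve
      = (dSeq τ m J : ℝ) / q ^ (J + 1) + (1/q) ^ (J + 1) * Vd := by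
    have h := hee2
    rw [hsd, hse] at h
    rw [hpre] at h
    linarith
  have htpos : (0:ℝ) < (1/q) ^ (J + 1) := by positivity
  have ht : ((1:ℝ)/q) ^ (J + 1) = 1 / q ^ (J + 1) := by rw [div_pow, one_pow]
  have hdJ := hd J
  have heJ := hee1 J
  have hVe0 : 0 ≤ Ve := sv_nonneg hq1
  have hVd0 : 0 ≤ Vd := sv_nonneg hq1
  -- case split on the first differing digit
  rcases (by omega : (dSeq τ m J = 0 ∧ ee J = 1) ∨ (dSeq τ m J = 1 ∧ ee J = 0)) with
    ⟨hc1, hc2⟩ | ⟨hc1, hc2⟩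
  · -- `Vd = 1 + Ve ≥ 1`, contradicting the Parry bound
    rcases Nat.eq_zero_or_pos e with he0 | he1
    · -- m = 1 : impossible since all digits of dSeq are 1
      have : dSeq τ m J = 1 := by
        have : m = 1 := by rw [hm, he0]; rfl
        rw [this]
        exact d_one hτ J
      omega
    · have hVd1 : Vd = 1 + Ve := by
        apply mul_left_cancel₀ (ne_of_gt htpos)
        rw [hc1, hc2] at hkey
        push_cast at hkey
        rw [ht] at hkey ⊢
        field_simp at hkey ⊢
        linarith
      have hlt : Vd < 1 := by
        apply parry_lt hq1 hq2 (alpha_le_one hτ) (alpha_val hτ hm he1 hq1 heq)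
          (alpha_inf hτ hm he1) _ (fun i => hd _) ?_ ?_
        · exact g1L hτ hm he1 (J + 1) (by omega)
        · intro hcon
          exact d_ne_alpha hτ hm he1 (show 1 ≤ J + 1 by omega) (fun x => congrFun hcon x)
      linarith
  · -- `Ve = 1 + Vd`, contradicting the reflected Parry bound
    have hVe1 : Ve = 1 + Vd := by
      apply mul_left_cancel₀ (ne_of_gt htpos)
      rw [hc1, hc2] at hkey
      push_cast at hkey
      rw [ht] at hkey ⊢
      field_simp at hkey ⊢
      linarith
    have hVele : Ve ≤ 1 / (q - 1) := sv_le hq1 (fun i => hee1 _)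
    rcases Nat.eq_zero_or_pos e with he0 | he1
    · -- m = 1 : the tail of dSeq is the all-ones sequence with value 1/(q-1)
      have hm1 : m = 1 := by rw [hm, he0]; rfl
      subst hm1
      have hdone : ∀ i : ℕ, (fun x => dSeq τ 1 (J + 1 + x)) i ≤ 1 := fun i => hd _
      have hVdval : Vd = 1 / (q - 1) := by
        have hper1 : ∀ i : ℕ, (fun x => dSeq τ 1 (J + 1 + x)) (i + 1)
            = (fun x => dSeq τ 1 (J + 1 + x)) i := by
          intro i
          show dSeq τ 1 (J + 1 + (i + 1)) = dSeq τ 1 (J + 1 + i)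
          rw [d_one hτ, d_one hτ]
        have := sv_periodic hq1 hdone le_rfl hper1
        rw [hVddef, this]
        have h1 : dSeq τ 1 (J + 1 + 0) = 1 := d_one hτ _
        rw [Finset.sum_range_one]
        show ((dSeq τ 1 (J + 1 + 0) : ℝ) / q ^ (0 + 1)) / (1 - (1/q)^1) = 1 / (q - 1)
        rw [h1]
        push_cast
        rw [pow_one, pow_one]
        field_simp
      rw [hVdval] at hVe1
      linarith
    · have hrefl := sv_reflect hq1 (fun i => hd (J + 1 + i) :
        ∀ i : ℕ, (fun x => dSeq τ m (J + 1 + x)) i ≤ 1)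
      have hlt : seqVal q (fun i => 1 - (fun x => dSeq τ m (J + 1 + x)) i) < 1 := by
        apply parry_lt hq1 hq2 (alpha_le_one hτ) (alpha_val hτ hm he1 hq1 heq)
          (alpha_inf hτ hm he1) _ (fun i => Nat.sub_le _ _) ?_ ?_
        · exact g2L hτ hm he1 (J + 1) (by omega)
        · intro hcon
          apply d_ne_alpha' hτ hm he1 (show 1 ≤ J + 1 by omega)
          intro x
          have := congrFun hcon x
          have h2 := d_le_one (m := m) hτ (J + 1 + x)
          have h3 := alpha_le_one (m := m) hτ x
          omega
      rw [hrefl] at hlt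
      linarith

/-- `q_n` satisfies `q + 1 ≤ q ^ 2`. -/
lemma q_quad (hτ : IsThueMorse τ) {q : ℝ} {K : ℕ} (hq1 : 1 < q) (hK : 2 ≤ K)
    (heq : (1:ℝ) = ∑ i ∈ Finset.range K, (τ (i + 1) : ℝ) / q ^ (i + 1)) :
    q + 1 ≤ q ^ 2 := by
  have hq0 : 0 < q := by linarith
  have t1 := tau_one hτ
  have t2 := tau_two hτ
  have hsub : ({0, 1} : Finset ℕ) ⊆ Finset.range K := by
    intro x hx
    simp only [Finset.mem_insert, Finset.mem_singleton] at hx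
    simp only [Finset.mem_range]
    omega
  have hge : ∑ i ∈ ({0, 1} : Finset ℕ), (τ (i + 1) : ℝ) / q ^ (i + 1)
      ≤ ∑ i ∈ Finset.range K, (τ (i + 1) : ℝ) / q ^ (i + 1) := by
    apply Finset.sum_le_sum_of_subset_of_nonneg hsub
    intro i _ _
    positivity
  have hpair : ∑ i ∈ ({0, 1} : Finset ℕ), (τ (i + 1) : ℝ) / q ^ (i + 1)
      = 1 / q + 1 / q ^ 2 := by
    rw [Finset.sum_pair (by norm_num : (0:ℕ) ≠ 1)]
    rw [t1, t2]
    norm_num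
  rw [hpair] at hge
  rw [← heq] at hge
  have h2 : (0:ℝ) < q ^ 2 := by positivity
  rw [div_add_div _ _ (by linarith) (by positivity), div_le_one (by positivity)] at hge
  nlinarith

end Main

section Mono
variable {τ : ℕ → ℕ}

lemma q_mono (hτ : IsThueMorse τ) {Q : ℕ → ℝ} (hQ : IsBaseSeq τ Q) (n : ℕ) (hn : 1 ≤ n) :
    Q n < Q (n + 1) := by
  obtain ⟨hx1, hx2, hxeq⟩ := hQ.2 n hn
  obtain ⟨hy1, hy2, hyeq⟩ := hQ.2 (n + 1) (by omega)
  by_contra hc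
  push_neg at hc
  have hx0 : (0:ℝ) < Q n := by linarith
  have hsub : Finset.range (2 ^ n) ⊆ Finset.range (2 ^ (n + 1)) :=
    Finset.range_subset_range.mpr (Nat.pow_le_pow_right (by norm_num) (by omega))
  have hone : (1:ℕ) ≤ 2 ^ (n + 1) := Nat.one_le_two_pow
  have hmem : 2 ^ (n + 1) - 1 ∈ Finset.range (2 ^ (n + 1)) := by
    simp only [Finset.mem_range]; omega
  have hnotmem : 2 ^ (n + 1) - 1 ∉ Finset.range (2 ^ n) := by
    simp only [Finset.mem_range, not_lt]
    have h1 : 2 ^ n < 2 ^ (n + 1) := Nat.pow_lt_pow_right (by norm_num) (by omega)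
    have h2 : 2 * 2 ^ n = 2 ^ (n + 1) := by rw [← pow_succ']
    omega
  have hterm : (0:ℝ) < (τ (2 ^ (n + 1) - 1 + 1) : ℝ) / (Q n) ^ (2 ^ (n + 1) - 1 + 1) := by
    have hτ1 : τ (2 ^ (n + 1) - 1 + 1) = 1 := by
      rw [show 2 ^ (n + 1) - 1 + 1 = 2 ^ (n + 1) by omega]
      exact tau_pow2 hτ (n + 1)
    rw [hτ1]
    positivity
  have hgt : (1:ℝ) < ∑ i ∈ Finset.range (2 ^ (n + 1)), (τ (i + 1) : ℝ) / (Q n) ^ (i + 1) := by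
    have h := Finset.sum_lt_sum_of_subset (f := fun i => (τ (i + 1) : ℝ) / (Q n) ^ (i + 1)) hsub hmem hnotmem hterm (fun i _ _ => by positivity)
    calc (1:ℝ) = ∑ i ∈ Finset.range (2 ^ n), (τ (i + 1) : ℝ) / (Q n) ^ (i + 1) := hxeq
      _ < _ := h
  have hle : ∑ i ∈ Finset.range (2 ^ (n + 1)), (τ (i + 1) : ℝ) / (Q n) ^ (i + 1)
      ≤ ∑ i ∈ Finset.range (2 ^ (n + 1)), (τ (i + 1) : ℝ) / (Q (n + 1)) ^ (i + 1) := by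
    apply Finset.sum_le_sum
    intro i _
    apply div_le_div_of_nonneg_left (by positivity) (by positivity)
    exact pow_le_pow_left₀ (by linarith) hc (i + 1)
  rw [← hyeq] at hle
  linarith

lemma frac_lt {x y : ℝ} (hx1 : 1 < x) (hy2 : y < 2) (hxy : x < y) {M M' : ℕ}
    (hM : 1 ≤ M) (hMM' : M ≤ M') :
    (2 - y) / ((y - 1) * y ^ M' * (y ^ M' - 1)) < (2 - x) / ((x - 1) * x ^ M * (x ^ M - 1)) := by
  have hy1 : 1 < y := by linarith
  have hx2 : x < 2 := by linarith
  have hxm : 1 < x ^ M := one_lt_pow₀ hx1 (by omega)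
  have hym' : 1 < y ^ M' := one_lt_pow₀ hy1 (by omega)
  have hden1 : 0 < (x - 1) * x ^ M * (x ^ M - 1) := by
    apply mul_pos (mul_pos (by linarith) (by positivity))
    linarith
  have hden2 : 0 < (y - 1) * y ^ M' * (y ^ M' - 1) := by
    apply mul_pos (mul_pos (by linarith) (by positivity))
    linarith
  have hxym : x ^ M < y ^ M' := by
    calc x ^ M < y ^ M := pow_lt_pow_left₀ hxy (by linarith) (by omega)
      _ ≤ y ^ M' := pow_le_pow_right₀ (by linarith) hMM'
  have hA : (x - 1) * x ^ M < (y - 1) * y ^ M' :=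
    mul_lt_mul (by linarith) (le_of_lt hxym) (by linarith) (by linarith)
  have hdenlt : (x - 1) * x ^ M * (x ^ M - 1) < (y - 1) * y ^ M' * (y ^ M' - 1) :=
    mul_lt_mul hA (by linarith) (by linarith) (mul_nonneg (by linarith) (by linarith))
  rw [div_lt_div_iff₀ hden2 hden1]
  have s1 : (2 - y) * ((x - 1) * x ^ M * (x ^ M - 1))
      < (2 - x) * ((x - 1) * x ^ M * (x ^ M - 1)) :=
    mul_lt_mul_of_pos_right (by linarith) hden1
  have s2 : (2 - x) * ((x - 1) * x ^ M * (x ^ M - 1))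
      < (2 - x) * ((y - 1) * y ^ M' * (y ^ M' - 1)) :=
    mul_lt_mul_of_pos_left hdenlt (by linarith)
  linarith

end Mono

/-- `z_n ∈ U_{q_n}` for all `n ≥ 1`, and `(z_n)_{n≥1}` strictly decreases
to `1`. -/
theorem zVal_mem_strictAnti_tendsto (τ : ℕ → ℕ) (hτ : IsThueMorse τ)
    (Q : ℕ → ℝ) (hQ : IsBaseSeq τ Q) :
    (∀ n, 1 ≤ n → zVal τ Q n ∈ Uset (Q n)) ∧
      StrictAnti (fun n => zVal τ Q (n + 1)) ∧
      Tendsto (fun n => zVal τ Q (n + 1)) atTop (nhds 1) := by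
  have hfacts : ∀ n : ℕ, 1 ≤ n → 1 < Q n ∧ Q n < 2 ∧
      (1:ℝ) = ∑ i ∈ Finset.range (2 * 2 ^ (n - 1)), (τ (i + 1) : ℝ) / (Q n) ^ (i + 1) := by
    intro n hn
    obtain ⟨h1, h2, h3⟩ := hQ.2 n hn
    refine ⟨h1, h2, ?_⟩
    rw [show 2 * 2 ^ (n - 1) = 2 ^ n by
      rw [← pow_succ']
      congr 1
      omega]
    exact h3
  have hrwz : ∀ n : ℕ, 1 ≤ n → zVal τ Q n = seqVal (Q n) (dSeq τ (2 ^ (n - 1))) := by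
    intro n hn
    unfold zVal
    rw [prefPeriodic_eq_dSeq τ (2 ^ (n - 1)) Nat.one_le_two_pow]
  have hform : ∀ n : ℕ, 1 ≤ n → zVal τ Q n
      = 1 + (2 - Q n) / ((Q n - 1) * (Q n) ^ (2 ^ (n - 1)) * ((Q n) ^ (2 ^ (n - 1)) - 1)) := by
    intro n hn
    obtain ⟨h1, h2, h3⟩ := hfacts n hn
    rw [hrwz n hn]
    exact zVal_formula hτ rfl h1 h3
  have h16 : ∀ n : ℕ, 1 ≤ n → (1.6:ℝ) ≤ Q n := by
    intro n hn
    obtain ⟨h1, h2, h3⟩ := hQ.2 n hn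
    have hK : 2 ≤ 2 ^ n := by
      calc 2 = 2 ^ 1 := rfl
        _ ≤ 2 ^ n := Nat.pow_le_pow_right (by norm_num) hn
    have hquad := q_quad hτ h1 hK h3
    nlinarith
  refine ⟨?_, ?_, ?_⟩
  · -- membership in the univoque set
    intro n hn
    obtain ⟨h1, h2, h3⟩ := hfacts n hn
    have hd := d_le_one (m := 2 ^ (n - 1)) hτ
    refine ⟨?_, ?_⟩
    · rw [hrwz n hn]
      exact ⟨sv_nonneg h1, sv_le h1 hd⟩
    · rw [hrwz n hn]
      refine ⟨dSeq τ (2 ^ (n - 1)), ⟨hd, rfl⟩, ?_⟩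
      intro y hy
      exact expansion_unique hτ rfl h1 h2 h3 y hy
  · -- strict decrease
    apply strictAnti_nat_of_succ_lt
    intro n
    rw [hform (n + 1) (by omega), hform (n + 2) (by omega)]
    rw [show n + 2 - 1 = n + 1 by omega, show n + 1 - 1 = n by omega]
    have h1 := (hfacts (n + 1) (by omega)).1
    have h2 := (hfacts (n + 2) (by omega)).2.1
    have hmono := q_mono hτ hQ (n + 1) (by omega)
    have hkey := frac_lt h1 h2 hmono (M := 2 ^ n) (M' := 2 ^ (n + 1))
      Nat.one_le_two_pow (Nat.pow_le_pow_right (by norm_num) (by omega))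
    linarith
  · -- convergence to 1
    have hlower : ∀ n : ℕ, (1:ℝ) ≤ zVal τ Q (n + 1) := by
      intro n
      have h1 := (hfacts (n + 1) (by omega)).1
      have h2 := (hfacts (n + 1) (by omega)).2.1
      rw [hform (n + 1) (by omega), show n + 1 - 1 = n by omega]
      have hqm : 1 < (Q (n + 1)) ^ (2 ^ n) := one_lt_pow₀ h1 (by positivity)
      have hden : 0 < (Q (n + 1) - 1) * (Q (n + 1)) ^ (2 ^ n) * ((Q (n + 1)) ^ (2 ^ n) - 1) := by
        apply mul_pos (mul_pos (by linarith) (by positivity))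
        linarith
      have : 0 ≤ (2 - Q (n + 1)) / ((Q (n + 1) - 1) * (Q (n + 1)) ^ (2 ^ n)
          * ((Q (n + 1)) ^ (2 ^ n) - 1)) := by
        apply div_nonneg (by linarith) (le_of_lt hden)
      linarith
    have hupper : ∀ n : ℕ, zVal τ Q (n + 1) ≤ 1 + 3 * (0.625:ℝ) ^ (n + 1) := by
      intro n
      have h1 := (hfacts (n + 1) (by omega)).1
      have h2 := (hfacts (n + 1) (by omega)).2.1
      have h16' := h16 (n + 1) (by omega)
      rw [hform (n + 1) (by omega), show n + 1 - 1 = n by omega]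
      set q := Q (n + 1) with hqdef
      have hp16 : (0:ℝ) < (1.6:ℝ) ^ (n + 1) := by positivity
      have hqM : (1.6:ℝ) ^ (n + 1) ≤ q ^ 2 ^ n := by
        calc (1.6:ℝ) ^ (n + 1) ≤ (1.6:ℝ) ^ 2 ^ n :=
            pow_le_pow_right₀ (by norm_num) Nat.lt_two_pow_self
          _ ≤ q ^ 2 ^ n := pow_le_pow_left₀ (by norm_num) h16' _
      have h16one : (1.6:ℝ) ≤ (1.6:ℝ) ^ (n + 1) := by
        calc (1.6:ℝ) = (1.6:ℝ) ^ 1 := (pow_one _).symm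
          _ ≤ (1.6:ℝ) ^ (n + 1) := pow_le_pow_right₀ (by norm_num) (by omega)
      have hA : (0.6:ℝ) ≤ q - 1 := by linarith
      have hC : (0.6:ℝ) ≤ q ^ 2 ^ n - 1 := by linarith
      have t1 : (0.6:ℝ) * (1.6:ℝ) ^ (n + 1) ≤ (q - 1) * q ^ 2 ^ n :=
        mul_le_mul hA hqM (le_of_lt hp16) (by linarith)
      have hden : (0.36:ℝ) * (1.6:ℝ) ^ (n + 1)
          ≤ (q - 1) * q ^ 2 ^ n * (q ^ 2 ^ n - 1) := by
        have t2 : ((0.6:ℝ) * (1.6:ℝ) ^ (n + 1)) * (0.6:ℝ)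
            ≤ ((q - 1) * q ^ 2 ^ n) * (q ^ 2 ^ n - 1) := by
          apply mul_le_mul t1 hC (by norm_num) (by nlinarith)
        nlinarith
      have hdpos : (0:ℝ) < (0.36:ℝ) * (1.6:ℝ) ^ (n + 1) := by positivity
      have hfr : (2 - q) / ((q - 1) * q ^ 2 ^ n * (q ^ 2 ^ n - 1))
          ≤ 1 / ((0.36:ℝ) * (1.6:ℝ) ^ (n + 1)) :=
        div_le_div₀ (by norm_num) (by linarith) hdpos hden
      have hlast : (1:ℝ) / ((0.36:ℝ) * (1.6:ℝ) ^ (n + 1)) ≤ 3 * (0.625:ℝ) ^ (n + 1) := by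
        have he : (0.625:ℝ) ^ (n + 1) = 1 / (1.6:ℝ) ^ (n + 1) := by
          rw [show (0.625:ℝ) = 1 / 1.6 by norm_num, div_pow, one_pow]
        rw [he, div_le_iff₀ hdpos]
        rw [show 3 * (1 / (1.6:ℝ) ^ (n + 1)) * (0.36 * (1.6:ℝ) ^ (n + 1))
            = 1.08 * ((1.6:ℝ) ^ (n + 1) / (1.6:ℝ) ^ (n + 1)) by ring]
        rw [div_self (ne_of_gt hp16)]
        norm_num
      linarith
    have hlim : Tendsto (fun n : ℕ => 1 + 3 * (0.625:ℝ) ^ (n + 1)) atTop (nhds 1) := by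
      have h0 : Tendsto (fun n : ℕ => (0.625:ℝ) ^ n) atTop (nhds 0) :=
        tendsto_pow_atTop_nhds_zero_of_lt_one (by norm_num) (by norm_num)
      have h1 : Tendsto (fun n : ℕ => (0.625:ℝ) ^ (n + 1)) atTop (nhds 0) :=
        h0.comp (tendsto_add_atTop_nat 1)
      have h2 := (h1.const_mul (3:ℝ)).const_add (1:ℝ)
      simpa using h2
    exact tendsto_of_tendsto_of_tendsto_of_le_of_le tendsto_const_nhds hlim hlower hupper
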